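/- If f : B(0,a) → ℝ is smooth on the ball B(0,a) ⊂ ℝⁿ and vanishes to infinite order at the origin (i.e. lim_{x→0} |x|^{-N} f(x) = 0 for every natural number N), then every partial derivative D^μ f also vanishes to infinite order at the origin. -/

import Mathlib

open Metric Filter Topology

set_option maxHeartbeats 1000000 in
/-- If `f` is smooth on the ball `B(0,a) ⊆ ℝⁿ` and vanishes to infinite order at the
origin, then every derivative of `f` also vanishes to infinite order at the origin. -/
theorem flat_smooth_derivatives_flat (n : ℕ) (a : ℝ) (ha : 0 < a)
    (f : EuclideanSpace ℝ (Fin n) → ℝ)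
    (hf : ContDiffOn ℝ (⊤ : ℕ∞) f (ball 0 a))
    (hflat : ∀ N : ℕ,
      Tendsto (fun x => f x / ‖x‖ ^ N)
        (𝓝[ball (0 : EuclideanSpace ℝ (Fin n)) a \ {0}] 0) (𝓝 0)) :
    ∀ (m N : ℕ),
      Tendsto (fun x => ‖iteratedFDerivWithin ℝ m f (ball 0 a) x‖ / ‖x‖ ^ N)
        (𝓝[ball (0 : EuclideanSpace ℝ (Fin n)) a \ {0}] 0) (𝓝 0) := by
  have hs : UniqueDiffOn ℝ (ball (0 : EuclideanSpace ℝ (Fin n)) a) :=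
    isOpen_ball.uniqueDiffOn
  intro m
  induction m with
  | zero =>
    intro N
    have h := (hflat N).abs
    rw [abs_zero] at h
    refine h.congr fun x => ?_
    rw [norm_iteratedFDerivWithin_zero, abs_div, Real.norm_eq_abs,
      abs_of_nonneg (pow_nonneg (norm_nonneg x) N)]
  | succ m IH =>
    intro N
    have hball : closedBall (0 : EuclideanSpace ℝ (Fin n)) (a / 2) ⊆ ball 0 a := by
      intro z hz
      rw [mem_closedBall] at hz
      rw [mem_ball]
      linarith
    have hcont : ContinuousOn (iteratedFDerivWithin ℝ (m + 2) f (ball 0 a)) (ball 0 a) :=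
      hf.continuousOn_iteratedFDerivWithin (ENat.natCast_le_of_coe_top_le_withTop le_rfl (m + 2)) hs
    obtain ⟨M, hM⟩ :=
      (isCompact_closedBall (0 : EuclideanSpace ℝ (Fin n)) (a / 2)).exists_bound_of_continuousOn
        (hcont.mono hball)
    have hM0 : 0 ≤ M :=
      le_trans (norm_nonneg _) (hM 0 (mem_closedBall_self (by linarith)))
    have hdm : DifferentiableOn ℝ (iteratedFDerivWithin ℝ m f (ball 0 a)) (ball 0 a) :=
      hf.differentiableOn_iteratedFDerivWithin
        (ENat.natCast_lt_of_coe_top_le_withTop le_rfl m) hs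
    have hdm1 : DifferentiableOn ℝ (iteratedFDerivWithin ℝ (m + 1) f (ball 0 a)) (ball 0 a) :=
      hf.differentiableOn_iteratedFDerivWithin
        (ENat.natCast_lt_of_coe_top_le_withTop le_rfl (m + 1)) hs
    -- Lipschitz estimate for the `(m+1)`-st derivative on the closed ball of radius `a/2`.
    have hlip : ∀ z ∈ closedBall (0 : EuclideanSpace ℝ (Fin n)) (a / 2),
        ∀ w ∈ closedBall (0 : EuclideanSpace ℝ (Fin n)) (a / 2),
        ‖iteratedFDerivWithin ℝ (m + 1) f (ball 0 a) z -
          iteratedFDerivWithin ℝ (m + 1) f (ball 0 a) w‖ ≤ M * ‖z - w‖ := by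
      intro z hz w hw
      refine (convex_closedBall _ _).norm_image_sub_le_of_norm_hasFDerivWithin_le
        (f' := fun u => fderivWithin ℝ (iteratedFDerivWithin ℝ (m + 1) f (ball 0 a)) (ball 0 a) u)
        (fun u hu => ((hdm1 u (hball hu)).hasFDerivWithinAt).mono hball)
        (fun u hu => ?_) hw hz
      rw [norm_fderivWithin_iteratedFDerivWithin]
      exact hM u hu
    -- identify `fderivWithin` of the `m`-th derivative with the `(m+1)`-st derivative
    have hFe : ∀ z, fderivWithin ℝ (iteratedFDerivWithin ℝ m f (ball 0 a)) (ball 0 a) z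
        = (continuousMultilinearCurryLeftEquiv ℝ
            (fun _ : Fin (m + 1) => EuclideanSpace ℝ (Fin n)) ℝ)
            (iteratedFDerivWithin ℝ (m + 1) f (ball 0 a) z) := by
      intro z
      have h := congrFun (iteratedFDerivWithin_succ_eq_comp_left
        (𝕜 := ℝ) (n := m) (f := f) (s := ball (0 : EuclideanSpace ℝ (Fin n)) a)) z
      rw [Function.comp_apply] at h
      rw [h, LinearIsometryEquiv.apply_symm_apply]
    rw [Metric.tendsto_nhdsWithin_nhds]
    intro ε' hε'
    set ε : ℝ := ε' / (2 * 2 ^ (2 * N + 3)) with hεdef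
    have hε : 0 < ε := by positivity
    obtain ⟨ρ, hρ0, hρ⟩ := Metric.tendsto_nhdsWithin_nhds.1 (IH (2 * N + 2)) _ hε
    refine ⟨min (min (ρ / 2) (a / 4)) (min 1 (Real.sqrt (ε' / (2 * (M + 1))))),
      by positivity, ?_⟩
    intro x hx hxd
    have hx0 : x ≠ 0 := fun h => hx.2 (by simp [h])
    have hxn : 0 < ‖x‖ := norm_pos_iff.2 hx0
    rw [dist_zero_right] at hxd
    have hxρ : ‖x‖ < ρ / 2 := lt_of_lt_of_le hxd ((min_le_left _ _).trans (min_le_left _ _))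
    have hxa : ‖x‖ < a / 4 := lt_of_lt_of_le hxd ((min_le_left _ _).trans (min_le_right _ _))
    have hx1 : ‖x‖ < 1 := lt_of_lt_of_le hxd ((min_le_right _ _).trans (min_le_left _ _))
    have hxsq : ‖x‖ < Real.sqrt (ε' / (2 * (M + 1))) :=
      lt_of_lt_of_le hxd ((min_le_right _ _).trans (min_le_right _ _))
    set d : ℝ := ‖x‖ ^ (N + 2) with hddef
    have hd0 : 0 < d := pow_pos hxn _
    have hdx : d < ‖x‖ := by
      have := pow_lt_pow_right_of_lt_one₀ hxn hx1 (Nat.lt_of_sub_eq_succ rfl : 1 < N + 2)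
      simpa using this
    -- flatness bound from the induction hypothesis
    have key : ∀ z, z ∈ ball (0 : EuclideanSpace ℝ (Fin n)) a \ {0} → ‖z‖ < ρ →
        ‖iteratedFDerivWithin ℝ m f (ball 0 a) z‖ ≤ ε * ‖z‖ ^ (2 * N + 2) := by
      intro z hz hzρ
      have hz0 : z ≠ 0 := fun h => hz.2 (by simp [h])
      have hzn : 0 < ‖z‖ := norm_pos_iff.2 hz0
      have := hρ hz (by rwa [dist_zero_right])
      rw [dist_zero_right, Real.norm_eq_abs,
        abs_of_nonneg (div_nonneg (norm_nonneg _) (pow_nonneg (norm_nonneg _) _))] at this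
      exact le_of_lt ((div_lt_iff₀ (pow_pos hzn _)).1 this)
    -- the main interpolation bound
    have hop : ‖iteratedFDerivWithin ℝ (m + 1) f (ball 0 a) x‖ ≤
        2 ^ (2 * N + 3) * ε * ‖x‖ ^ N + M * ‖x‖ ^ (N + 2) := by
      rw [← norm_fderivWithin_iteratedFDerivWithin]
      refine ContinuousLinearMap.opNorm_le_bound _ (by positivity) fun v => ?_
      rcases eq_or_ne v 0 with rfl | hv
      · simp
      have hvn : 0 < ‖v‖ := norm_pos_iff.2 hv
      set y : EuclideanSpace ℝ (Fin n) := x + (d * ‖v‖⁻¹) • v with hydef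
      have hyx : y - x = (d * ‖v‖⁻¹) • v := by rw [hydef]; abel
      have hnyx : ‖y - x‖ = d := by
        rw [hyx, norm_smul, Real.norm_eq_abs, abs_of_pos (by positivity)]
        field_simp
      have hsub : closedBall x d ⊆ closedBall (0 : EuclideanSpace ℝ (Fin n)) (a / 2) := by
        intro w hw
        rw [mem_closedBall] at hw ⊢
        calc dist w 0 ≤ dist w x + dist x 0 := dist_triangle _ _ _
          _ ≤ d + ‖x‖ := by rw [dist_zero_right]; linarith [hw]
          _ ≤ a / 2 := by linarith
      have hy_mem : y ∈ closedBall x d := by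
        rw [mem_closedBall, dist_eq_norm, hnyx]
      have hy_ball : y ∈ ball (0 : EuclideanSpace ℝ (Fin n)) a := hball (hsub hy_mem)
      have hy_lb : ‖x‖ - d ≤ ‖y‖ := by
        have := abs_norm_sub_norm_le y x
        rw [← hnyx] at *
        have h2 := (abs_le.1 this).1
        linarith [h2]
      have hy0 : y ≠ 0 := by
        intro h
        rw [h, norm_zero] at hy_lb
        linarith
      have hy_ub : ‖y‖ ≤ 2 * ‖x‖ := by
        have : ‖y‖ ≤ ‖x‖ + ‖y - x‖ := by
          calc ‖y‖ = ‖x + (y - x)‖ := by congr 1; abel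
            _ ≤ ‖x‖ + ‖y - x‖ := norm_add_le _ _
        rw [hnyx] at this
        linarith
      -- mean value inequality with fixed linear map
      have mvt := (convex_closedBall x d).norm_image_sub_le_of_norm_hasFDerivWithin_le'
        (f := iteratedFDerivWithin ℝ m f (ball 0 a))
        (f' := fun u => fderivWithin ℝ (iteratedFDerivWithin ℝ m f (ball 0 a)) (ball 0 a) u)
        (φ := fderivWithin ℝ (iteratedFDerivWithin ℝ m f (ball 0 a)) (ball 0 a) x)
        (C := M * d)
        (fun u hu => ((hdm u (hball (hsub hu))).hasFDerivWithinAt).mono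
          (Set.Subset.trans hsub hball))
        (fun u hu => ?_) (mem_closedBall_self hd0.le) hy_mem
      swap
      · simp only [hFe]
        rw [← LinearIsometryEquiv.map_sub, LinearIsometryEquiv.norm_map]
        calc ‖iteratedFDerivWithin ℝ (m + 1) f (ball 0 a) u -
              iteratedFDerivWithin ℝ (m + 1) f (ball 0 a) x‖
            ≤ M * ‖u - x‖ := hlip u (hsub hu) x (hsub (mem_closedBall_self hd0.le))
          _ ≤ M * d := by
              have : ‖u - x‖ ≤ d := by rw [← dist_eq_norm]; exact hu
              exact mul_le_mul_of_nonneg_left this hM0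
      rw [hnyx] at mvt
      -- flatness bounds at `x` and `y`
      have hgx : ‖iteratedFDerivWithin ℝ m f (ball 0 a) x‖ ≤ ε * (2 * ‖x‖) ^ (2 * N + 2) := by
        refine le_trans (key x hx (by linarith)) ?_
        have : ‖x‖ ^ (2 * N + 2) ≤ (2 * ‖x‖) ^ (2 * N + 2) :=
          pow_le_pow_left₀ (norm_nonneg _) (by linarith) _
        exact mul_le_mul_of_nonneg_left this hε.le
      have hgy : ‖iteratedFDerivWithin ℝ m f (ball 0 a) y‖ ≤ ε * (2 * ‖x‖) ^ (2 * N + 2) := by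
        refine le_trans (key y ⟨hy_ball, by simp [hy0]⟩ (by linarith)) ?_
        have : ‖y‖ ^ (2 * N + 2) ≤ (2 * ‖x‖) ^ (2 * N + 2) :=
          pow_le_pow_left₀ (norm_nonneg _) hy_ub _
        exact mul_le_mul_of_nonneg_left this hε.le
      -- combine
      set A := (fderivWithin ℝ (iteratedFDerivWithin ℝ m f (ball 0 a)) (ball 0 a) x) (y - x)
        with hAdef
      have hA : ‖A‖ ≤ 2 * ε * (2 * ‖x‖) ^ (2 * N + 2) + M * d * d := by
        have t2 : ‖A‖ ≤ ‖iteratedFDerivWithin ℝ m f (ball 0 a) y -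
            iteratedFDerivWithin ℝ m f (ball 0 a) x - A‖ +
            ‖iteratedFDerivWithin ℝ m f (ball 0 a) y -
              iteratedFDerivWithin ℝ m f (ball 0 a) x‖ := by
          calc ‖A‖ = ‖(iteratedFDerivWithin ℝ m f (ball 0 a) y -
              iteratedFDerivWithin ℝ m f (ball 0 a) x) -
              (iteratedFDerivWithin ℝ m f (ball 0 a) y -
                iteratedFDerivWithin ℝ m f (ball 0 a) x - A)‖ := by rw [sub_sub_cancel]
            _ ≤ _ := by
                rw [add_comm]
                exact norm_sub_le _ _
        have t3 : ‖iteratedFDerivWithin ℝ m f (ball 0 a) y -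
            iteratedFDerivWithin ℝ m f (ball 0 a) x‖ ≤
            ‖iteratedFDerivWithin ℝ m f (ball 0 a) y‖ +
              ‖iteratedFDerivWithin ℝ m f (ball 0 a) x‖ := norm_sub_le _ _
        linarith [mvt, t2, t3, hgx, hgy]
      -- convert from the value at `y - x` to the value at `v`
      have hAv : A = (d * ‖v‖⁻¹) •
          (fderivWithin ℝ (iteratedFDerivWithin ℝ m f (ball 0 a)) (ball 0 a) x) v := by
        rw [hAdef, hyx, map_smul]
      have hnormv : ‖(fderivWithin ℝ (iteratedFDerivWithin ℝ m f (ball 0 a)) (ball 0 a) x) v‖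
          = (‖v‖ / d) * ‖A‖ := by
        rw [hAv, norm_smul, Real.norm_eq_abs, abs_of_pos (by positivity)]
        field_simp
      rw [hnormv]
      have halg : (‖v‖ / d) * (2 * ε * (2 * ‖x‖) ^ (2 * N + 2) + M * d * d) =
          (2 ^ (2 * N + 3) * ε * ‖x‖ ^ N + M * ‖x‖ ^ (N + 2)) * ‖v‖ := by
        rw [hddef, mul_pow]
        have hxne : ‖x‖ ≠ 0 := ne_of_gt hxn
        field_simp
        ring
      calc (‖v‖ / d) * ‖A‖ ≤ (‖v‖ / d) * (2 * ε * (2 * ‖x‖) ^ (2 * N + 2) + M * d * d) := by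
            exact mul_le_mul_of_nonneg_left hA (by positivity)
        _ = _ := halg
    -- finish
    rw [dist_zero_right, Real.norm_eq_abs,
      abs_of_nonneg (div_nonneg (norm_nonneg _) (pow_nonneg (norm_nonneg _) _))]
    have hstep : ‖iteratedFDerivWithin ℝ (m + 1) f (ball 0 a) x‖ / ‖x‖ ^ N ≤
        2 ^ (2 * N + 3) * ε + M * ‖x‖ ^ 2 := by
      have hpow : (0:ℝ) < ‖x‖ ^ N := pow_pos hxn _
      rw [div_le_iff₀ hpow]
      calc ‖iteratedFDerivWithin ℝ (m + 1) f (ball 0 a) x‖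
          ≤ 2 ^ (2 * N + 3) * ε * ‖x‖ ^ N + M * ‖x‖ ^ (N + 2) := hop
        _ = (2 ^ (2 * N + 3) * ε + M * ‖x‖ ^ 2) * ‖x‖ ^ N := by ring
    have h1 : (2:ℝ) ^ (2 * N + 3) * ε = ε' / 2 := by
      rw [hεdef]
      field_simp
    have h2 : ‖x‖ ^ 2 < ε' / (2 * (M + 1)) := (Real.lt_sqrt (norm_nonneg x)).1 hxsq
    have h3 : (M + 1) * (ε' / (2 * (M + 1))) = ε' / 2 := by field_simp
    have h4 : M * ‖x‖ ^ 2 < ε' / 2 := by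
      calc M * ‖x‖ ^ 2 ≤ (M + 1) * ‖x‖ ^ 2 := by nlinarith [sq_nonneg ‖x‖]
        _ < (M + 1) * (ε' / (2 * (M + 1))) := by
            exact mul_lt_mul_of_pos_left h2 (by linarith)
        _ = ε' / 2 := h3
    linarith [hstep]
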